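/- Let q be a prime power, a ∣ ℓ, m ≥ 1, and suppose q^ℓ > C(q^{m-1}, 2)·((q^a − 1)/(q − 1))^2 + 1, where C(·,·) is the binomial coefficient. Then there exists an m-dimensional F_q-subspace W of F_{q^ℓ} such that dim_{F_q}(γF_{q^a} ∩ W) ∈ {0, 1} for all γ ∈ F_{q^ℓ}*. -/

import Mathlib

open Module Finset
set_option linter.unusedSectionVars false
set_option linter.unusedVariables false
set_option maxHeartbeats 1000000

section Aux
variable {K F : Type*} [Field K] [Field F] [Algebra K F] [Fintype K] [Fintype F]

def Stmt6Good (A : IntermediateField K F) (W : Submodule K F) : Prop :=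
  ∀ x ∈ W, ∀ β ∈ A, x ≠ 0 → β * x ∈ W → ∃ c : K, β = algebraMap K F c


lemma stmt6good_sup {A : IntermediateField K F} {W : Submodule K F}
    (hG : Stmt6Good A W) {w : F}
    (hw : ∀ β₁ ∈ A, ∀ β₂ ∈ A, ∀ u ∈ W, ∀ v ∈ W, w ≠ β₁ * u + β₂ * v) :
    Stmt6Good A (W ⊔ Submodule.span K {w}) := by
  have hwW : w ∉ W := fun hmem => hw 1 (one_mem A) 0 (zero_mem A) w hmem 0 (zero_mem W) (by ring)
  have hw0 : w ≠ 0 := fun h => hwW (h ▸ zero_mem W)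
  intro x hx β hβ hx0 hβx
  rw [Submodule.mem_sup] at hx hβx
  obtain ⟨u, hu, s, hs, hux⟩ := hx
  obtain ⟨v, hv, r, hr, hvx⟩ := hβx
  rw [Submodule.mem_span_singleton] at hs hr
  obtain ⟨c, rfl⟩ := hs
  obtain ⟨d, rfl⟩ := hr
  rw [Algebra.smul_def] at hux hvx
  have key : (β * algebraMap K F c - algebraMap K F d) * w = v - β * u := by
    linear_combination β * hux - hvx
  by_cases h : β * algebraMap K F c - algebraMap K F d = 0
  · have hvu : v = β * u := by
      have h2 := key; rw [h, zero_mul] at h2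
      linear_combination -h2
    by_cases hu0 : u = 0
    · have hc0 : c ≠ 0 := by
        rintro rfl
        apply hx0
        rw [← hux, hu0, map_zero]; ring
      have hc'0 : algebraMap K F c ≠ 0 := fun hh => hc0 ((algebraMap K F).injective (by simpa using hh))
      refine ⟨d * c⁻¹, ?_⟩
      rw [map_mul, map_inv₀]
      field_simp
      linear_combination sub_eq_zero.mp h
    · exact hG u hu β hβ hu0 (by rw [← hvu]; exact hv)
  · exfalso
    have hA1 : (β * algebraMap K F c - algebraMap K F d)⁻¹ ∈ A :=
      A.inv_mem (sub_mem (mul_mem hβ (A.algebraMap_mem c)) (A.algebraMap_mem d))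
    have hA2 : -((β * algebraMap K F c - algebraMap K F d)⁻¹ * β) ∈ A := neg_mem (mul_mem hA1 hβ)
    refine hw (-((β * algebraMap K F c - algebraMap K F d)⁻¹ * β)) hA2
      ((β * algebraMap K F c - algebraMap K F d)⁻¹) hA1 u hu v hv ?_
    rw [show w = (β * algebraMap K F c - algebraMap K F d)⁻¹ * (v - β * u) by
      field_simp
      linear_combination key]
    ring

lemma stmt6good_finrank {A : IntermediateField K F} {W : Submodule K F}
    (h : Stmt6Good A W) (γ : F) (hγ : γ ≠ 0) :
    finrank K ↥((Subalgebra.toSubmodule A.toSubalgebra).map (LinearMap.mulLeft K γ) ⊓ W)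
      ≤ 1 := by
  set S := (Subalgebra.toSubmodule A.toSubalgebra).map (LinearMap.mulLeft K γ) ⊓ W with hS
  rcases eq_or_ne S ⊥ with hbot | hbot
  · rw [hbot, finrank_bot]; norm_num
  · obtain ⟨x₀, hx₀S, hx₀⟩ := Submodule.exists_mem_ne_zero_of_ne_bot hbot
    have hle : S ≤ Submodule.span K {x₀} := by
      intro y hy
      obtain ⟨⟨t, ht, hty⟩, hyW⟩ := hy
      obtain ⟨⟨s, hs, hsx⟩, hxW⟩ := hx₀S
      simp only [LinearMap.mulLeft_apply] at hty hsx
      simp only [SetLike.mem_coe, Subalgebra.mem_toSubmodule, IntermediateField.mem_toSubalgebra] at ht hs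
      have hs0 : s ≠ 0 := by rintro rfl; simp at hsx; exact hx₀ hsx.symm
      have hβA : t * s⁻¹ ∈ A := mul_mem ht (A.inv_mem hs)
      have hβx : (t * s⁻¹) * x₀ = y := by
        rw [← hsx, ← hty]; field_simp
      have hβxW : (t * s⁻¹) * x₀ ∈ W := by rw [hβx]; exact hyW
      obtain ⟨c, hc⟩ := h x₀ hxW _ hβA hx₀ hβxW
      rw [Submodule.mem_span_singleton]
      exact ⟨c, by rw [← hβx, hc, Algebra.smul_def]⟩
    calc finrank K ↥S ≤ finrank K ↥(Submodule.span K {x₀}) := Submodule.finrank_mono hle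
      _ = 1 := finrank_span_singleton hx₀

lemma stmt6_exists_w (q ℓ a m : ℕ) (hq : Fintype.card K = q) (hℓ : finrank K F = ℓ)
    (A : IntermediateField K F) (hA : finrank K ↥A = a)
    (hbig : q ^ ℓ > Nat.choose (q ^ (m - 1)) 2 * ((q ^ a - 1) / (q - 1)) ^ 2 + 1)
    (W : Submodule K F) (i : ℕ) (hi : finrank K ↥W = i) (him : i < m) :
    ∃ w : F, ∀ β₁ ∈ A, ∀ β₂ ∈ A, ∀ u ∈ W, ∀ v ∈ W, w ≠ β₁ * u + β₂ * v := by
  classical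
  have hinj : Function.Injective (algebraMap K F) := (algebraMap K F).injective
  have hq2 : 2 ≤ q := hq ▸ Fintype.one_lt_card
  have ha1 : 1 ≤ a := by
    rw [← hA]
    exact Module.finrank_pos
  set AF : Finset F := univ.filter (· ∈ A) with hAF
  set WF : Finset F := univ.filter (· ∈ W) with hWF
  have hAcard : AF.card = q ^ a := by
    rw [hAF, ← Fintype.card_subtype, ← hq, ← hA]
    exact card_eq_pow_finrank
  have hWcard : WF.card = q ^ i := by
    rw [hWF, ← Fintype.card_subtype, ← hq, ← hi]
    exact card_eq_pow_finrank
  set A0 := AF.erase 0 with hA0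
  set W0 := WF.erase 0 with hW0
  have hA0card : A0.card = q ^ a - 1 := by
    rw [hA0, card_erase_of_mem (by simp [hAF, zero_mem]), hAcard]
  have hW0card : W0.card = q ^ i - 1 := by
    rw [hW0, card_erase_of_mem (by simp [hWF, zero_mem]), hWcard]
  set f1 : F × F → F := fun p => p.1 * p.2 with hf1
  set P1 := A0 ×ˢ W0 with hP1
  set B1 := P1.image f1 with hB1def
  set Puv := (W0 ×ˢ WF).filter (fun p => p.2 ∉ Submodule.span K {p.1}) with hPuv
  set P2 := (A0 ×ˢ A0) ×ˢ Puv with hP2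
  set f2 : (F × F) × F × F → F := fun p => p.1.1 * p.2.1 + p.1.2 * p.2.2 with hf2
  set B2 := P2.image f2 with hB2def
  set Bad := insert (0:F) (B1 ∪ B2) with hBad
  -- coverage
  have hsingle : ∀ β ∈ A, ∀ u ∈ W, β * u ∈ Bad := by
    intro β hβ u hu
    by_cases hb : β = 0
    · simp [hBad, hb]
    by_cases hu0 : u = 0
    · simp [hBad, hu0]
    refine mem_insert_of_mem (mem_union_left _ (mem_image.mpr ⟨(β, u), ?_, rfl⟩))
    rw [hP1, mem_product]
    constructor
    · exact mem_erase.mpr ⟨hb, by simp [hAF, hβ]⟩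
    · exact mem_erase.mpr ⟨hu0, by simp [hWF, hu]⟩
  have hcover : ∀ β₁ ∈ A, ∀ β₂ ∈ A, ∀ u ∈ W, ∀ v ∈ W, β₁ * u + β₂ * v ∈ Bad := by
    intro β₁ h₁ β₂ h₂ u hu v hv
    by_cases hc1 : β₁ = 0 ∨ u = 0
    · have : β₁ * u + β₂ * v = β₂ * v := by rcases hc1 with h | h <;> rw [h] <;> ring
      rw [this]; exact hsingle β₂ h₂ v hv
    push_neg at hc1
    obtain ⟨hb1, hu0⟩ := hc1
    by_cases hc2 : β₂ = 0 ∨ v = 0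
    · have : β₁ * u + β₂ * v = β₁ * u := by rcases hc2 with h | h <;> rw [h] <;> ring
      rw [this]; exact hsingle β₁ h₁ u hu
    push_neg at hc2
    obtain ⟨hb2, hv0⟩ := hc2
    by_cases hsp : v ∈ Submodule.span K {u}
    · obtain ⟨e, rfl⟩ := Submodule.mem_span_singleton.mp hsp
      rw [Algebra.smul_def]
      have : β₁ * u + β₂ * (algebraMap K F e * u) = (β₁ + β₂ * algebraMap K F e) * u := by ring
      rw [this]
      exact hsingle _ (add_mem h₁ (mul_mem h₂ (A.algebraMap_mem e))) u hu
    refine mem_insert_of_mem (mem_union_right _ (mem_image.mpr ⟨((β₁, β₂), (u, v)), ?_, rfl⟩))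
    rw [hP2, mem_product]
    refine ⟨mem_product.mpr ⟨mem_erase.mpr ⟨hb1, by simp [hAF, h₁]⟩, mem_erase.mpr ⟨hb2, by simp [hAF, h₂]⟩⟩, ?_⟩
    rw [hPuv, mem_filter, mem_product]
    exact ⟨⟨mem_erase.mpr ⟨hu0, by simp [hWF, hu]⟩, by simp [hWF, hv]⟩, hsp⟩
  -- counting B1
  have hcount1 : (q - 1) * B1.card ≤ (q ^ a - 1) * (q ^ i - 1) := by
    have hfib : ∀ b ∈ P1.image f1, q - 1 ≤ (P1.filter (fun p => f1 p = b)).card := by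
      intro b hb
      obtain ⟨⟨β, u⟩, hp, rfl⟩ := mem_image.mp hb
      rw [hP1, mem_product] at hp
      obtain ⟨hβ0, hβA⟩ := mem_erase.mp hp.1
      obtain ⟨hu0, huW⟩ := mem_erase.mp hp.2
      rw [hAF, mem_filter] at hβA
      rw [hWF, mem_filter] at huW
      have hcard : ((univ : Finset K).erase 0).card = q - 1 := by
        rw [card_erase_of_mem (mem_univ _), card_univ, hq]
      rw [← hcard]
      apply card_le_card_of_injOn (fun c => (algebraMap K F c * β, algebraMap K F c⁻¹ * u))
      · intro c hc
        have hc0 : c ≠ 0 := (mem_erase.mp hc).1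
        have hac : algebraMap K F c ≠ 0 := fun h => hc0 (hinj (h.trans (map_zero _).symm))
        have haci : algebraMap K F c⁻¹ ≠ 0 := fun h => (inv_ne_zero hc0) (hinj (h.trans (map_zero _).symm))
        rw [mem_coe, mem_filter]
        constructor
        · rw [hP1, mem_product]
          refine ⟨mem_erase.mpr ⟨mul_ne_zero hac hβ0, by simp [hAF, mul_mem (A.algebraMap_mem c) hβA.2]⟩,
            mem_erase.mpr ⟨mul_ne_zero haci hu0, by simp only [hWF, mem_filter, mem_univ, true_and]; rw [← Algebra.smul_def]; exact W.smul_mem _ huW.2⟩⟩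
        · show algebraMap K F c * β * (algebraMap K F c⁻¹ * u) = β * u
          have h1 : algebraMap K F c * algebraMap K F c⁻¹ = 1 := by
            rw [← map_mul, mul_inv_cancel₀ hc0, map_one]
          linear_combination (β * u) * h1
      · intro c hc c' hc' heq
        have h1 : algebraMap K F c * β = algebraMap K F c' * β := congrArg Prod.fst heq
        exact hinj (mul_right_cancel₀ hβ0 h1)
    have h1 := Finset.mul_card_image_le_card P1 (q - 1) hfib
    have h2 : P1.card = (q ^ a - 1) * (q ^ i - 1) := by
      rw [hP1, card_product, hA0card, hW0card]
    rw [← h2]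
    rw [hB1def]
    exact h1
  -- counting B2
  have hcount2 : (2 * (q - 1) ^ 2) * B2.card ≤ (q ^ a - 1) ^ 2 * ((q ^ i - 1) * (q ^ i - q)) := by
    have hone : ∀ c : K, c ≠ 0 → algebraMap K F c * algebraMap K F c⁻¹ = 1 := by
      intro c hc
      rw [← map_mul, mul_inv_cancel₀ hc, map_one]
    have hanz : ∀ c : K, c ≠ 0 → algebraMap K F c ≠ 0 :=
      fun c hc h => hc (hinj (h.trans (map_zero _).symm))
    have hmemA0 : ∀ (c : K) (β : F), c ≠ 0 → β ∈ A0 → algebraMap K F c * β ∈ A0 := by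
      intro c β hc hβ
      obtain ⟨hβ0, hβA⟩ := mem_erase.mp hβ
      rw [hAF, mem_filter] at hβA
      exact mem_erase.mpr ⟨mul_ne_zero (hanz c hc) hβ0, by simp [hAF, mul_mem (A.algebraMap_mem c) hβA.2]⟩
    have hmemWF : ∀ (c : K) (x : F), x ∈ WF → algebraMap K F c * x ∈ WF := by
      intro c x hx
      rw [hWF, mem_filter] at hx ⊢
      refine ⟨mem_univ _, ?_⟩
      rw [← Algebra.smul_def]
      exact W.smul_mem _ hx.2
    have hmemW0 : ∀ (c : K) (x : F), c ≠ 0 → x ∈ W0 → algebraMap K F c * x ∈ W0 := by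
      intro c x hc hx
      obtain ⟨hx0, hxW⟩ := mem_erase.mp hx
      exact mem_erase.mpr ⟨mul_ne_zero (hanz c hc) hx0, hmemWF c x hxW⟩
    have hscale : ∀ (c d : K), c ≠ 0 → d ≠ 0 → ∀ (x y : F), y ∉ Submodule.span K {x} →
        algebraMap K F d * y ∉ Submodule.span K {algebraMap K F c * x} := by
      intro c d hc hd x y hxy hmem
      obtain ⟨e, he⟩ := Submodule.mem_span_singleton.mp hmem
      apply hxy
      refine Submodule.mem_span_singleton.mpr ⟨d⁻¹ * e * c, ?_⟩
      rw [Algebra.smul_def] at he ⊢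
      rw [map_mul, map_mul, map_inv₀]
      have hd' := hanz d hd
      field_simp
      linear_combination he
    -- fibers
    have hfib2 : ∀ b ∈ P2.image f2, 2 * (q - 1) ^ 2 ≤ (P2.filter (fun p => f2 p = b)).card := by
      intro b hb
      obtain ⟨⟨⟨β₁, β₂⟩, ⟨u, v⟩⟩, hp, rfl⟩ := mem_image.mp hb
      rw [hP2, mem_product] at hp
      obtain ⟨hA12, hPuvm⟩ := hp
      rw [mem_product] at hA12
      obtain ⟨hβ₁A0, hβ₂A0⟩ := hA12
      rw [hPuv, mem_filter, mem_product] at hPuvm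
      obtain ⟨⟨huW0, hvWF⟩, hsp⟩ := hPuvm
      simp only at hβ₁A0 hβ₂A0 huW0 hvWF hsp
      have hu0 : u ≠ 0 := (mem_erase.mp huW0).1
      have hβ₁0 : β₁ ≠ 0 := (mem_erase.mp hβ₁A0).1
      have hβ₂0 : β₂ ≠ 0 := (mem_erase.mp hβ₂A0).1
      have hv0 : v ≠ 0 := fun h => hsp (by rw [h]; exact zero_mem _)
      have hvW0 : v ∈ W0 := mem_erase.mpr ⟨hv0, hvWF⟩
      have huWF : u ∈ WF := (mem_erase.mp huW0).2
      have husp : u ∉ Submodule.span K {v} := by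
        intro hmem
        obtain ⟨e, he⟩ := Submodule.mem_span_singleton.mp hmem
        have he0 : e ≠ 0 := by rintro rfl; rw [zero_smul] at he; exact hu0 he.symm
        exact hsp (Submodule.mem_span_singleton.mpr
          ⟨e⁻¹, by rw [← he, smul_smul, inv_mul_cancel₀ he0, one_smul]⟩)
      have hKK : ((((univ : Finset K).erase 0) ×ˢ (((univ : Finset K).erase 0) ×ˢ (univ : Finset Bool))).card) = 2 * (q - 1) ^ 2 := by
        simp only [card_product, card_erase_of_mem (mem_univ _), card_univ, Fintype.card_bool, hq]
        ring
      rw [← hKK]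
      apply card_le_card_of_injOn (fun p =>
        cond p.2.2
          ((algebraMap K F p.2.1 * β₂, algebraMap K F p.1 * β₁),
            (algebraMap K F p.2.1⁻¹ * v, algebraMap K F p.1⁻¹ * u))
          ((algebraMap K F p.1 * β₁, algebraMap K F p.2.1 * β₂),
            (algebraMap K F p.1⁻¹ * u, algebraMap K F p.2.1⁻¹ * v)))
      · rintro ⟨c, d, s⟩ hcd
        simp only [mem_coe, mem_product, mem_erase, mem_univ, and_true] at hcd
        obtain ⟨hc0, hd0⟩ := hcd
        cases s
        · -- unswapped
          simp only [cond_false]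
          rw [mem_coe, mem_filter]
          constructor
          · rw [hP2, mem_product, mem_product]
            refine ⟨⟨hmemA0 c β₁ hc0 hβ₁A0, hmemA0 d β₂ hd0 hβ₂A0⟩, ?_⟩
            rw [hPuv, mem_filter, mem_product]
            exact ⟨⟨hmemW0 c⁻¹ u (inv_ne_zero hc0) huW0, hmemWF d⁻¹ v hvWF⟩,
              hscale c⁻¹ d⁻¹ (inv_ne_zero hc0) (inv_ne_zero hd0) u v hsp⟩
          · show algebraMap K F c * β₁ * (algebraMap K F c⁻¹ * u)
              + algebraMap K F d * β₂ * (algebraMap K F d⁻¹ * v) = β₁ * u + β₂ * v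
            linear_combination (β₁ * u) * hone c hc0 + (β₂ * v) * hone d hd0
        · -- swapped
          simp only [cond_true]
          rw [mem_coe, mem_filter]
          constructor
          · rw [hP2, mem_product, mem_product]
            refine ⟨⟨hmemA0 d β₂ hd0 hβ₂A0, hmemA0 c β₁ hc0 hβ₁A0⟩, ?_⟩
            rw [hPuv, mem_filter, mem_product]
            exact ⟨⟨hmemW0 d⁻¹ v (inv_ne_zero hd0) hvW0, hmemWF c⁻¹ u huWF⟩,
              hscale d⁻¹ c⁻¹ (inv_ne_zero hd0) (inv_ne_zero hc0) v u husp⟩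
          · show algebraMap K F d * β₂ * (algebraMap K F d⁻¹ * v)
              + algebraMap K F c * β₁ * (algebraMap K F c⁻¹ * u) = β₁ * u + β₂ * v
            linear_combination (β₁ * u) * hone c hc0 + (β₂ * v) * hone d hd0
      · rintro ⟨c, d, s⟩ hcd ⟨c', d', s'⟩ hcd' heq
        simp only [coe_product, Set.mem_prod, mem_coe, mem_erase, mem_univ, and_true] at hcd hcd'
        obtain ⟨hc0, hd0⟩ := hcd
        obtain ⟨hc'0, hd'0⟩ := hcd'
        cases s <;> cases s' <;>
          simp only [cond_false, cond_true, Prod.mk.injEq] at heq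
        · obtain ⟨⟨e1, e2⟩, e3, e4⟩ := heq
          have hc : c = c' := hinj (mul_right_cancel₀ hβ₁0 e1)
          have hd : d = d' := hinj (mul_right_cancel₀ hβ₂0 e2)
          simp [hc, hd]
        · -- s = false, s' = true : contradiction via e4
          obtain ⟨⟨e1, e2⟩, e3, e4⟩ := heq
          exfalso
          apply husp
          refine Submodule.mem_span_singleton.mpr ⟨c * d'⁻¹, ?_⟩
          rw [Algebra.smul_def, map_mul]
          -- e3 : algebraMap c⁻¹ * u = algebraMap d'⁻¹ * v
          linear_combination u * hone c hc0 - algebraMap K F c * e3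
        · obtain ⟨⟨e1, e2⟩, e3, e4⟩ := heq
          exfalso
          apply husp
          refine Submodule.mem_span_singleton.mpr ⟨c' * d⁻¹, ?_⟩
          rw [Algebra.smul_def, map_mul]
          linear_combination u * hone c' hc'0 - algebraMap K F c' * e3.symm
        · obtain ⟨⟨e1, e2⟩, e3, e4⟩ := heq
          have hd : d = d' := hinj (mul_right_cancel₀ hβ₂0 e1)
          have hc : c = c' := hinj (mul_right_cancel₀ hβ₁0 e2)
          simp [hc, hd]
    -- Puv card bound
    have hPuvcard : Puv.card ≤ (q ^ i - 1) * (q ^ i - q) := by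
      have hfilternot : ∀ u, u ∈ W0 → (WF.filter (fun v => v ∉ Submodule.span K {u})).card ≤ q ^ i - q := by
        intro u hu
        obtain ⟨hu0, huWF⟩ := mem_erase.mp hu
        have huW : u ∈ W := by rw [hWF, mem_filter] at huWF; exact huWF.2
        have hle : Submodule.span K {u} ≤ W := (Submodule.span_singleton_le_iff_mem u W).mpr huW
        have hq_le : q ≤ (WF.filter (fun v => v ∈ Submodule.span K {u})).card := by
          have hcardspan : (univ.filter (fun v => v ∈ Submodule.span K {u})).card = q := by
            rw [← Fintype.card_subtype, card_eq_pow_finrank (K := K), hq,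
              finrank_span_singleton hu0, pow_one]
          rw [← hcardspan]
          apply card_le_card
          intro x hx
          rw [mem_filter] at hx ⊢
          exact ⟨by rw [hWF, mem_filter]; exact ⟨mem_univ _, hle hx.2⟩, hx.2⟩
        have := card_filter_add_card_filter_not (s := WF)
          (p := fun v => v ∈ Submodule.span K {u})
        rw [hWcard] at this
        omega
      calc Puv.card ≤ (W0.biUnion (fun u => (WF.filter (fun v => v ∉ Submodule.span K {u})).image
          (fun v => (u, v)))).card := by
            apply card_le_card
            intro p hp
            rw [hPuv, mem_filter, mem_product] at hp
            exact mem_biUnion.mpr ⟨p.1, hp.1.1, mem_image.mpr ⟨p.2, mem_filter.mpr ⟨hp.1.2, hp.2⟩, rfl⟩⟩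
        _ ≤ ∑ u ∈ W0, ((WF.filter (fun v => v ∉ Submodule.span K {u})).image (fun v => (u, v))).card :=
            card_biUnion_le
        _ ≤ ∑ u ∈ W0, (q ^ i - q) :=
            sum_le_sum (fun u hu => le_trans card_image_le (hfilternot u hu))
        _ = (q ^ i - 1) * (q ^ i - q) := by rw [sum_const, hW0card, smul_eq_mul]
    have h1 := Finset.mul_card_image_le_card P2 (2 * (q - 1) ^ 2) hfib2
    have h2 : P2.card = (q ^ a - 1) ^ 2 * Puv.card := by
      rw [hP2, card_product, card_product, hA0card]
      ring
    calc (2 * (q - 1) ^ 2) * B2.card ≤ P2.card := h1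
      _ = (q ^ a - 1) ^ 2 * Puv.card := h2
      _ ≤ (q ^ a - 1) ^ 2 * ((q ^ i - 1) * (q ^ i - q)) := Nat.mul_le_mul_left _ hPuvcard
  -- arithmetic
  have hBadcard : Bad.card < Fintype.card F := by
    have hcardF : Fintype.card F = q ^ ℓ := by
      rw [card_eq_pow_finrank (K := K), hq, hℓ]
    have hub : Bad.card ≤ B1.card + B2.card + 1 := by
      calc Bad.card ≤ (B1 ∪ B2).card + 1 := card_insert_le _ _
        _ ≤ B1.card + B2.card + 1 := by have := card_union_le B1 B2; omega
    have hdvd : (q - 1) ∣ (q ^ a - 1) := by simpa using Nat.sub_dvd_pow_sub_pow q 1 a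
    have hL : (q ^ a - 1) / (q - 1) * (q - 1) = q ^ a - 1 := Nat.div_mul_cancel hdvd
    have hR1 : 1 ≤ q ^ (m - 1) := Nat.one_le_pow _ _ (by omega)
    have hCh : (q ^ (m - 1)).choose 2 * 2 = q ^ (m - 1) * (q ^ (m - 1) - 1) := by
      rw [Nat.choose_two_right]
      refine Nat.div_mul_cancel (Even.two_dvd ?_)
      have h2 : q ^ (m-1) * (q ^ (m-1) - 1) = (q ^ (m-1) - 1) * ((q ^ (m-1) - 1) + 1) := by
        rw [Nat.sub_add_cancel hR1]; ring
      rw [h2]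
      exact Nat.even_mul_succ_self _
    have harith : 2*(q-1)*((q^a-1)*(q^i-1)) + (q^a-1)^2*((q^i-1)*(q^i-q))
        ≤ (q^(m-1)*(q^(m-1)-1))*(q^a-1)^2 := by
      by_cases hi0 : i = 0
      · subst hi0; simp
      · have hqQ : q ≤ q ^ i := Nat.le_self_pow hi0 q
        have hQR : q ^ i ≤ q ^ (m-1) := Nat.pow_le_pow_right (by omega) (by omega)
        have hqa : q ≤ q ^ a := Nat.le_self_pow (by omega) q
        set e := q^a - 1 with he
        set p := q - 1 with hp
        set x := q^i - 1 with hx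
        set y := q^i - q with hy
        set r1 := q^(m-1) - 1 with hr1
        have hpe : p ≤ e := by omega
        have hp1 : 1 ≤ p := by omega
        have hxy : y + p = x := by omega
        have hxr : x ≤ r1 := by omega
        have hRr : q^(m-1) = r1 + 1 := by omega
        calc 2*p*(e*x) + e^2*(x*y) ≤ 2*e*(e*x) + e^2*(x*y) := by gcongr
          _ = e^2*(x*(y+2)) := by ring
          _ ≤ e^2*(x*(x+1)) := Nat.mul_le_mul_left _ (Nat.mul_le_mul_left _ (by omega))
          _ ≤ e^2*(r1*(r1+1)) := Nat.mul_le_mul_left _ (Nat.mul_le_mul (by omega) (by omega))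
          _ = ((r1+1)*r1)*e^2 := by ring
          _ = (q^(m-1)*(q^(m-1)-1))*e^2 := by rw [hRr, Nat.add_sub_cancel]
    have hkey : B1.card + B2.card ≤ (q ^ (m-1)).choose 2 * ((q^a-1)/(q-1))^2 := by
      have hpos : 0 < 2*(q-1)^2 := by
        have h1 : 0 < q - 1 := by omega
        positivity
      refine Nat.le_of_mul_le_mul_left ?_ hpos
      calc 2*(q-1)^2 * (B1.card + B2.card)
          = 2*(q-1)*((q-1)*B1.card) + 2*(q-1)^2*B2.card := by ring
        _ ≤ 2*(q-1)*((q^a-1)*(q^i-1)) + (q^a-1)^2*((q^i-1)*(q^i-q)) :=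
            add_le_add (Nat.mul_le_mul_left _ hcount1) hcount2
        _ ≤ (q^(m-1)*(q^(m-1)-1))*(q^a-1)^2 := harith
        _ = ((q ^ (m-1)).choose 2 * 2) * (((q^a-1)/(q-1)) * (q-1))^2 := by rw [hCh, hL]
        _ = 2*(q-1)^2 * ((q ^ (m-1)).choose 2 * ((q^a-1)/(q-1))^2) := by ring
    rw [hcardF]
    omega
  obtain ⟨w, hwBad⟩ : ∃ w : F, w ∉ Bad := by
    by_contra hcon
    push_neg at hcon
    have hsub : (univ : Finset F) ⊆ Bad := fun x _ => hcon x
    have := card_le_card hsub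
    rw [card_univ] at this
    omega
  exact ⟨w, fun β₁ h₁ β₂ h₂ u hu v hv heq => hwBad (heq ▸ hcover β₁ h₁ β₂ h₂ u hu v hv)⟩

lemma stmt6_build (q ℓ a m : ℕ) (hq : Fintype.card K = q) (hℓ : finrank K F = ℓ)
    (A : IntermediateField K F) (hA : finrank K ↥A = a)
    (hbig : q ^ ℓ > Nat.choose (q ^ (m - 1)) 2 * ((q ^ a - 1) / (q - 1)) ^ 2 + 1) :
    ∀ i, i ≤ m → ∃ W : Submodule K F, finrank K ↥W = i ∧ Stmt6Good A W := by
  intro i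
  induction i with
  | zero =>
    intro _
    refine ⟨⊥, finrank_bot K F, fun x hx β hβ hx0 _ => absurd ((Submodule.mem_bot K).mp hx) hx0⟩
  | succ n ih =>
    intro hn
    obtain ⟨W, hW, hG⟩ := ih (by omega)
    obtain ⟨w, hw⟩ := stmt6_exists_w q ℓ a m hq hℓ A hA hbig W n hW (by omega)
    have hwW : w ∉ W := fun hmem => hw 1 (one_mem A) 0 (zero_mem A) w hmem 0 (zero_mem W) (by ring)
    have hw0 : w ≠ 0 := fun h => hwW (h ▸ zero_mem W)
    refine ⟨W ⊔ Submodule.span K {w}, ?_, stmt6good_sup hG hw⟩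
    have hinf : W ⊓ Submodule.span K {w} = ⊥ := by
      rw [Submodule.eq_bot_iff]
      rintro x ⟨hxW, hxs⟩
      obtain ⟨c, rfl⟩ := Submodule.mem_span_singleton.mp hxs
      rcases eq_or_ne c 0 with rfl | hc
      · rw [zero_smul]
      · exfalso
        apply hwW
        have h2 := W.smul_mem c⁻¹ hxW
        rwa [smul_smul, inv_mul_cancel₀ hc, one_smul] at h2
    have hsum := Submodule.finrank_sup_add_finrank_inf_eq W (Submodule.span K {w})
    rw [hinf, finrank_bot, hW, finrank_span_singleton hw0] at hsum
    omega

end Aux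

/-- if `a ∣ ℓ`, `m ≥ 1`, and `q^ℓ > C(q^{m-1},2)·((q^a−1)/(q−1))² + 1`, then
there is an `m`-dimensional `F_q`-subspace `W` with `dim(γF_{q^a} ∩ W) ∈ {0,1}` for all
nonzero `γ`. -/
theorem stmt6 {K F : Type*} [Field K] [Field F] [Algebra K F] [Fintype K] [Fintype F]
    (q ℓ a m : ℕ) (hq : Fintype.card K = q) (hℓ : finrank K F = ℓ)
    (ha : a ∣ ℓ) (hm : 1 ≤ m)
    (A : IntermediateField K F) (hA : finrank K A = a)
    (hbig : q ^ ℓ > Nat.choose (q ^ (m - 1)) 2 * ((q ^ a - 1) / (q - 1)) ^ 2 + 1) :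
    ∃ W : Submodule K F, finrank K W = m ∧ ∀ γ : F, γ ≠ 0 →
      finrank K ↥((Subalgebra.toSubmodule A.toSubalgebra).map (LinearMap.mulLeft K γ) ⊓ W)
        ≤ 1 := by
  obtain ⟨W, hW, hG⟩ := stmt6_build q ℓ a m hq hℓ A hA hbig m le_rfl
  exact ⟨W, hW, fun γ hγ => stmt6good_finrank hG γ hγ⟩
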